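/- Let Λ be an artin algebra, M a finitely generated Λ-module, and f: M → Y a left minimal map where Y = ⊕_{i∈I} Y_i is a direct sum of non-zero modules. Then the index set I is finite. -/

import Mathlib

universe u v

/-- Let `Λ` be an artin algebra (a finite dimensional algebra over a field), `M` a
finitely generated `Λ`-module and `f : M → ⨁_{i ∈ I} Y_i` a left minimal map (every
endomorphism `g` of the target with `g ∘ f = f` is an automorphism) into a direct sum
of non-zero modules `Y_i`. Then the index set `I` is finite. -/
theorem stmt_13 {k : Type u} [Field k] {Λ : Type u} [Ring Λ] [Algebra k Λ]
    [FiniteDimensional k Λ] {I : Type v} (Y : I → ModuleCat.{v} Λ)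
    (hY : ∀ i, Nontrivial ↥(Y i))
    (M : ModuleCat.{v} Λ) (hM : Module.Finite Λ ↥M)
    (f : ↥M →ₗ[Λ] DirectSum I fun i => ↥(Y i))
    (hmin : ∀ g : (DirectSum I fun i => ↥(Y i)) →ₗ[Λ] DirectSum I fun i => ↥(Y i),
      g.comp f = f → Function.Bijective g) :
    Finite I := by
  classical
  obtain ⟨s, hs⟩ := hM.fg_top
  set S : Finset I := s.sup (fun x => (f x).support) with hS
  set g : (DirectSum I fun i => ↥(Y i)) →ₗ[Λ] DirectSum I fun i => ↥(Y i) :=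
    DFinsupp.filterLinearMap Λ _ (· ∈ S) with hg
  have hgf : g.comp f = f := by
    apply LinearMap.ext_on hs
    intro x hx
    refine DFinsupp.ext fun i => ?_
    show (DFinsupp.filter (· ∈ S) (f x)) i = (f x) i
    rw [DFinsupp.filter_apply]
    split_ifs with h
    · rfl
    · by_contra hne
      exact h (Finset.le_sup (f := fun x => (f x).support) hx
        (DFinsupp.mem_support_iff.mpr fun h0 => hne (h0 ▸ rfl)))
  have hbij := hmin g hgf
  have hall : ∀ i : I, i ∈ S := by
    intro i
    by_contra hi
    obtain ⟨y, hy⟩ := exists_ne (0 : ↥(Y i))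
    have h0 : g (DirectSum.of (fun i => ↥(Y i)) i y) = 0 := by
      refine DFinsupp.ext fun j => ?_
      rw [DFinsupp.zero_apply]
      show (DFinsupp.filter (· ∈ S) (DirectSum.of (fun i => ↥(Y i)) i y)) j = 0
      rw [DFinsupp.filter_apply]
      split_ifs with h
      · rcases eq_or_ne j i with rfl | hji
        · exact absurd h hi
        · exact DFinsupp.single_eq_of_ne hji
      · rfl
    have h1 := hbij.injective (h0.trans (map_zero g).symm)
    have h2 := DFunLike.congr_fun h1 i
    rw [DirectSum.of_eq_same, DFinsupp.zero_apply] at h2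
    exact hy h2
  exact Finite.of_injective (fun i => (⟨i, hall i⟩ : {x // x ∈ S}))
    (fun a b h => congrArg Subtype.val h)
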